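/- Let N be a norm on ℝ^m and let x_1, …, x_n ∈ ℝ^m be vectors with N(x_i) ≤ 1 for every i and x_1 + ⋯ + x_n = 0. Then there exists a permutation π of {1, …, n} such that for every k ∈ {1, …, n} the partial sum satisfies N(x_{π(1)} + ⋯ + x_{π(k)}) ≤ m. -/

import Mathlib

open Finset

namespace SteinitzAux

variable {m n : ℕ}

/-- Feasible weight vector for set `B` with total mass `s`. -/
def Feas (x : Fin n → Fin m → ℝ) (B : Finset (Fin n)) (s : ℝ) (l : Fin n → ℝ) : Prop :=
  (∀ i, 0 ≤ l i ∧ l i ≤ 1) ∧ (∀ i ∉ B, l i = 0) ∧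
    (∑ i ∈ B, l i = s) ∧ (∑ i ∈ B, l i • x i = 0)

lemma perturb (x : Fin n → Fin m → ℝ) (B : Finset (Fin n)) (s : ℝ) (l : Fin n → ℝ)
    (hf : Feas x B s l)
    (hT : m + 1 < (B.filter fun i => 0 < l i ∧ l i < 1).card) :
    ∃ l', Feas x B s l' ∧
      (B.filter fun i => 0 < l' i ∧ l' i < 1).card <
        (B.filter fun i => 0 < l i ∧ l i < 1).card := by
  classical
  obtain ⟨hb, h0, hs, hx⟩ := hf
  set T : Finset (Fin n) := B.filter fun i => 0 < l i ∧ l i < 1 with hTdef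
  have hTB : T ⊆ B := filter_subset _ _
  -- linear dependence of (1, x i), i ∈ T
  have hdep : ¬ LinearIndependent ℝ (fun i : T => (Fin.cons 1 (x i) : Fin (m+1) → ℝ)) := by
    intro hl
    have := hl.fintype_card_le_finrank
    simp [Fintype.card_coe] at this
    omega
  obtain ⟨g, hg, i₁, hi₁⟩ := Fintype.not_linearIndependent_iff.1 hdep
  set c : Fin n → ℝ := fun i => if h : i ∈ T then g ⟨i, h⟩ else 0 with hcdef
  have hc0 : ∀ i ∉ T, c i = 0 := fun i hi => by simp [hcdef, hi]
  have hcT : ∀ i (h : i ∈ T), c i = g ⟨i, h⟩ := fun i h => by simp [hcdef, h]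
  have hgsum : ∀ j : Fin (m+1), ∑ i : T, g i * (Fin.cons 1 (x i) : Fin (m+1) → ℝ) j = 0 := by
    intro j
    have := congrFun hg j
    simpa [Finset.sum_apply] using this
  have hcsum : ∑ i ∈ T, c i = 0 := by
    rw [← Finset.sum_attach T c]
    have := hgsum 0
    simpa [hcT] using this
  have hcx : ∑ i ∈ T, c i • x i = 0 := by
    funext j
    rw [Finset.sum_apply]
    have := hgsum j.succ
    rw [← Finset.sum_attach T (fun i => (c i • x i) j)]
    simpa [hcT, Fin.cons_succ] using this
  -- the step size
  set S : Finset (Fin n) := T.filter fun i => c i ≠ 0 with hSdef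
  have hSne : S.Nonempty := ⟨i₁, by simp [hSdef, hcT _ i₁.2, i₁.2]; simpa using hi₁⟩
  set r : Fin n → ℝ := fun i => if 0 < c i then (1 - l i) / c i else l i / (-c i) with hrdef
  have hint : ∀ i ∈ T, 0 < l i ∧ l i < 1 := fun i hi => (mem_filter.1 hi).2
  have hrpos : ∀ i ∈ S, 0 < r i := by
    intro i hi
    obtain ⟨hiT, hc⟩ := mem_filter.1 hi
    obtain ⟨h1, h2⟩ := hint i hiT
    rcases lt_or_gt_of_ne hc with h | h
    · simp only [hrdef, if_neg (not_lt.2 h.le)]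
      exact div_pos h1 (by linarith)
    · simp only [hrdef, if_pos h]
      exact div_pos (by linarith) h
  set t : ℝ := S.inf' hSne r with htdef
  have htpos : 0 < t := (Finset.lt_inf'_iff hSne).2 hrpos
  have htle : ∀ i ∈ S, t ≤ r i := fun i hi => Finset.inf'_le _ hi
  obtain ⟨i₀, hi₀S, hi₀⟩ := Finset.exists_mem_eq_inf' hSne r
  set l' : Fin n → ℝ := fun i => l i + t * c i with hl'def
  have hl'eq : ∀ i ∉ T, l' i = l i := fun i hi => by simp [hl'def, hc0 i hi]
  -- bounds for l'
  have key : ∀ i ∈ S, 0 ≤ l' i ∧ l' i ≤ 1 := by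
    intro i hi
    obtain ⟨hiT, hc⟩ := mem_filter.1 hi
    obtain ⟨h1, h2⟩ := hint i hiT
    have hti := htle i hi
    rcases lt_or_gt_of_ne hc with h | h
    · -- c i < 0
      have hr : r i = l i / (-c i) := by simp [hrdef, not_lt.2 h.le]
      have : r i * c i = -l i := by
        rw [hr, div_mul_eq_mul_div, div_neg, mul_div_cancel_right₀ _ hc]
      constructor
      · have : t * c i ≥ r i * c i := by
          apply mul_le_mul_of_nonpos_right hti h.le
        simp only [hl'def]; nlinarith
      · simp only [hl'def]; nlinarith
    · -- 0 < c i
      have hr : r i = (1 - l i) / c i := by simp [hrdef, h]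
      have hrc : r i * c i = 1 - l i := by
        rw [hr, div_mul_cancel₀ _ hc]
      constructor
      · simp only [hl'def]; nlinarith
      · have : t * c i ≤ r i * c i := mul_le_mul_of_nonneg_right hti h.le
        simp only [hl'def]; nlinarith
  have hb' : ∀ i, 0 ≤ l' i ∧ l' i ≤ 1 := by
    intro i
    by_cases hiT : i ∈ T
    · by_cases hc : c i = 0
      · simp only [hl'def, hc, mul_zero, add_zero]; exact hb i
      · exact key i (mem_filter.2 ⟨hiT, hc⟩)
    · rw [hl'eq i hiT]; exact hb i
  have hcB : ∑ i ∈ B, c i = 0 := by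
    rw [← Finset.sum_subset hTB (fun i _ hi => hc0 i hi)]; exact hcsum
  have hcxB : ∑ i ∈ B, c i • x i = 0 := by
    rw [← Finset.sum_subset hTB (fun i _ hi => by simp [hc0 i hi])]; exact hcx
  refine ⟨l', ⟨hb', fun i hi => by rw [hl'eq i (fun h => hi (hTB h))]; exact h0 i hi, ?_, ?_⟩, ?_⟩
  · simp only [hl'def, Finset.sum_add_distrib, ← Finset.mul_sum, hcB, mul_zero, add_zero, hs]
  · have : ∑ i ∈ B, l' i • x i = ∑ i ∈ B, (l i • x i + t • (c i • x i)) := by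
      apply Finset.sum_congr rfl
      intro i _
      simp [hl'def, add_smul, mul_smul]
    rw [this, Finset.sum_add_distrib, hx, ← Finset.smul_sum, hcxB, smul_zero, add_zero]
  · -- cardinality decreases
    have hi₀T : i₀ ∈ T := (mem_filter.1 hi₀S).1
    have hi₀c : c i₀ ≠ 0 := (mem_filter.1 hi₀S).2
    have hnotint : ¬ (0 < l' i₀ ∧ l' i₀ < 1) := by
      obtain ⟨h1, h2⟩ := hint i₀ hi₀T
      have ht0 : t = r i₀ := hi₀
      rcases lt_or_gt_of_ne hi₀c with h | h
      · have hr : r i₀ = l i₀ / (-c i₀) := by simp [hrdef, not_lt.2 h.le]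
        have hrc : r i₀ * c i₀ = -l i₀ := by
          rw [hr, div_mul_eq_mul_div, div_neg, mul_div_cancel_right₀ _ hi₀c]
        have h4 : l' i₀ = 0 := by
          show l i₀ + t * c i₀ = 0
          rw [ht0]; linarith
        rw [h4]; simp
      · have hr : r i₀ = (1 - l i₀) / c i₀ := by simp [hrdef, h]
        have hrc : r i₀ * c i₀ = 1 - l i₀ := by
          rw [hr, div_mul_cancel₀ _ hi₀c]
        have h4 : l' i₀ = 1 := by
          show l i₀ + t * c i₀ = 1
          rw [ht0]; linarith
        rw [h4]; simp
    have hsub : (B.filter fun i => 0 < l' i ∧ l' i < 1) ⊆ T.erase i₀ := by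
      intro i hi
      obtain ⟨hiB, hint'⟩ := mem_filter.1 hi
      have hiT : i ∈ T := by
        by_contra hiT
        rw [hl'eq i hiT] at hint'
        exact hiT (mem_filter.2 ⟨hiB, hint'⟩)
      refine mem_erase.2 ⟨?_, hiT⟩
      rintro rfl; exact hnotint hint'
    calc (B.filter fun i => 0 < l' i ∧ l' i < 1).card ≤ (T.erase i₀).card :=
          card_le_card hsub
      _ < T.card := card_erase_lt_of_mem hi₀T


lemma vertex (x : Fin n → Fin m → ℝ) (B : Finset (Fin n)) (s : ℝ) :
    ∀ d (l : Fin n → ℝ), Feas x B s l →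
      (B.filter fun i => 0 < l i ∧ l i < 1).card ≤ d →
      ∃ l', Feas x B s l' ∧ (B.filter fun i => 0 < l' i ∧ l' i < 1).card ≤ m + 1 := by
  intro d
  induction d with
  | zero => intro l hf hc; exact ⟨l, hf, by omega⟩
  | succ d ih =>
    intro l hf hc
    by_cases h : (B.filter fun i => 0 < l i ∧ l i < 1).card ≤ m + 1
    · exact ⟨l, hf, h⟩
    · obtain ⟨l', hf', hlt⟩ := perturb x B s l hf (by omega)
      exact ih l' hf' (by omega)

/-- `Good A k`: exists feasible weights on `A` with total `k - m`. -/
def Good (x : Fin n → Fin m → ℝ) (A : Finset (Fin n)) (k : ℕ) : Prop :=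
  ∃ l, Feas x A ((k : ℝ) - m) l

lemma good_step (x : Fin n → Fin m → ℝ) (A : Finset (Fin n)) (k : ℕ)
    (hm : 0 < m) (hk : m ≤ k) (hcard : A.card = k + 1)
    (hg : Good x A (k + 1)) : ∃ i ∈ A, Good x (A.erase i) k := by
  classical
  obtain ⟨l, hb, h0, hs, hx⟩ := hg
  have hden : (0 : ℝ) < (k : ℝ) + 1 - m := by
    have : (m : ℝ) ≤ k := by exact_mod_cast hk
    linarith
  set ρ : ℝ := ((k : ℝ) - m) / ((k : ℝ) + 1 - m) with hρdef
  have hρ0 : 0 ≤ ρ := by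
    apply div_nonneg _ hden.le
    have : (m : ℝ) ≤ k := by exact_mod_cast hk
    linarith
  have hρ1 : ρ ≤ 1 := by
    rw [div_le_one hden]; linarith
  set l₂ : Fin n → ℝ := fun i => ρ * l i with hl₂def
  have hf₂ : Feas x A ((k : ℝ) - m) l₂ := by
    refine ⟨fun i => ⟨mul_nonneg hρ0 (hb i).1, ?_⟩, fun i hi => by simp [hl₂def, h0 i hi], ?_, ?_⟩
    · calc ρ * l i ≤ 1 * 1 := mul_le_mul hρ1 (hb i).2 (hb i).1 zero_le_one
        _ = 1 := one_mul 1
    · rw [hl₂def]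
      simp only [← Finset.mul_sum]
      rw [hs, hρdef]
      field_simp
      rw [Nat.cast_add, Nat.cast_one]
    · have : ∑ i ∈ A, l₂ i • x i = ρ • ∑ i ∈ A, l i • x i := by
        rw [Finset.smul_sum]
        exact Finset.sum_congr rfl fun i _ => by simp [hl₂def, mul_smul]
      rw [this, hx, smul_zero]
  obtain ⟨l', hf', hcard'⟩ := vertex x A ((k:ℝ) - m) ((A.filter _).card) l₂ hf₂ le_rfl
  obtain ⟨hb', h0', hs', hx'⟩ := hf'
  -- find a zero coordinate
  have hzero : ∃ i ∈ A, l' i = 0 := by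
    by_contra hno
    push_neg at hno
    have hpos : ∀ i ∈ A, 0 < l' i := fun i hi => lt_of_le_of_ne (hb' i).1 (Ne.symm (hno i hi))
    set P : Finset (Fin n) := A.filter fun i => l' i = 1 with hPdef
    have hcover : A ⊆ (A.filter fun i => 0 < l' i ∧ l' i < 1) ∪ P := by
      intro i hi
      rcases lt_or_eq_of_le (hb' i).2 with h | h
      · exact Finset.mem_union_left _ (mem_filter.2 ⟨hi, hpos i hi, h⟩)
      · exact Finset.mem_union_right _ (mem_filter.2 ⟨hi, h⟩)
    have hPcard : k - m ≤ P.card := by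
      have := Finset.card_le_card hcover
      have := Finset.card_union_le (A.filter fun i => 0 < l' i ∧ l' i < 1) P
      omega
    have hPA : P ⊆ A := filter_subset _ _
    have hPsum : ∑ i ∈ P, l' i = (P.card : ℝ) := by
      rw [Finset.sum_congr rfl (fun i hi => (mem_filter.1 hi).2)]
      simp
      rw [hPdef]
    have hsplit : ∑ i ∈ A \ P, l' i + ∑ i ∈ P, l' i = ∑ i ∈ A, l' i :=
      Finset.sum_sdiff hPA
    have hPne : P ≠ A := by
      intro h
      rw [h, hs', hcard] at hPsum
      have hm' : (0:ℝ) < m := by exact_mod_cast hm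
      push_cast at hPsum
      linarith
    have hAPne : (A \ P).Nonempty := by
      rw [Finset.sdiff_nonempty]
      intro h
      exact hPne (Finset.Subset.antisymm hPA h)
    have hAP_strict : 0 < ∑ i ∈ A \ P, l' i := by
      obtain ⟨i, hi⟩ := hAPne
      have hiA := (Finset.mem_sdiff.1 hi).1
      exact Finset.sum_pos' (fun j _ => (hb' j).1) ⟨i, hi, hpos i hiA⟩
    have hc1 : ((k - m : ℕ) : ℝ) ≤ (P.card : ℝ) := by exact_mod_cast hPcard
    have hc2 : ((k - m : ℕ) : ℝ) = (k:ℝ) - m := by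
      push_cast [hk]; ring
    linarith [hsplit, hs', hPsum, hAP_strict, hc1, hc2]
  obtain ⟨i, hiA, hi0⟩ := hzero
  refine ⟨i, hiA, l', hb', ?_, ?_, ?_⟩
  · intro j hj
    by_cases hjA : j ∈ A
    · have : j = i := by
        by_contra hne
        exact hj (Finset.mem_erase.2 ⟨hne, hjA⟩)
      rw [this]; exact hi0
    · exact h0' j hjA
  · rw [Finset.sum_erase A hi0, hs']
  · have : ∑ j ∈ A.erase i, l' j • x j = ∑ j ∈ A, l' j • x j := by
      apply Finset.sum_erase
      simp [hi0]
    rw [this, hx']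


section NormFacts
variable (N : (Fin m → ℝ) → ℝ)
  (hN_smul : ∀ (a : ℝ) (v : Fin m → ℝ), N (a • v) = |a| * N v)
  (hN_add : ∀ v w : Fin m → ℝ, N (v + w) ≤ N v + N w)

include hN_smul in
lemma N_zero' : N 0 = 0 := by
  have := hN_smul 0 0
  simpa using this

include hN_smul hN_add in
lemma N_nonneg' (v : Fin m → ℝ) : 0 ≤ N v := by
  have h0 : N 0 = 0 := N_zero' N hN_smul
  have h1 : N (-v) = N v := by
    have := hN_smul (-1) v
    simpa using this
  have := hN_add v (-v)
  rw [add_neg_cancel, h0, h1] at this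
  linarith

include hN_smul hN_add in
lemma N_sum_le' {ι : Type*} (s : Finset ι) (f : ι → Fin m → ℝ) :
    N (∑ i ∈ s, f i) ≤ ∑ i ∈ s, N (f i) := by
  classical
  induction s using Finset.cons_induction with
  | empty => simp [N_zero' N hN_smul]
  | cons a s ha ih =>
    rw [Finset.sum_cons, Finset.sum_cons]
    calc N (f a + ∑ i ∈ s, f i) ≤ N (f a) + N (∑ i ∈ s, f i) := hN_add _ _
      _ ≤ N (f a) + ∑ i ∈ s, N (f i) := by linarith

include hN_smul hN_add in
lemma good_bound (x : Fin n → Fin m → ℝ) (hx_norm : ∀ i, N (x i) ≤ 1)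
    (A : Finset (Fin n)) (k : ℕ) (hA : A.card = k) (hg : Good x A k) :
    N (∑ i ∈ A, x i) ≤ m := by
  obtain ⟨l, hb, h0, hs, hx⟩ := hg
  have key : ∑ i ∈ A, x i = ∑ i ∈ A, (1 - l i) • x i := by
    have : ∑ i ∈ A, (1 - l i) • x i = ∑ i ∈ A, (x i - l i • x i) := by
      apply Finset.sum_congr rfl
      intro i _
      rw [sub_smul, one_smul]
    rw [this, Finset.sum_sub_distrib, hx, sub_zero]
  rw [key]
  calc N (∑ i ∈ A, (1 - l i) • x i) ≤ ∑ i ∈ A, N ((1 - l i) • x i) :=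
        N_sum_le' N hN_smul hN_add _ _
    _ = ∑ i ∈ A, (1 - l i) * N (x i) := by
        apply Finset.sum_congr rfl
        intro i _
        rw [hN_smul, abs_of_nonneg (by linarith [(hb i).2])]
    _ ≤ ∑ i ∈ A, (1 - l i) := by
        apply Finset.sum_le_sum
        intro i _
        have h1 : (0:ℝ) ≤ 1 - l i := by linarith [(hb i).2]
        calc (1 - l i) * N (x i) ≤ (1 - l i) * 1 :=
              mul_le_mul_of_nonneg_left (hx_norm i) h1
          _ = 1 - l i := mul_one _
    _ = (A.card : ℝ) - ∑ i ∈ A, l i := by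
        rw [Finset.sum_sub_distrib]
        simp
    _ = (m : ℝ) := by rw [hs, hA]; ring

end NormFacts

lemma chain_exists (x : Fin n → Fin m → ℝ) (hm : 0 < m) (hmn : m ≤ n)
    (hx_sum : ∑ i, x i = 0) :
    ∃ C : ℕ → Finset (Fin n),
      (∀ k, k ≤ n → (C k).card = k) ∧ (∀ k, k < n → C k ⊆ C (k + 1)) ∧
      (∀ k, m ≤ k → k ≤ n → Good x (C k) k) := by
  classical
  have hn : 0 < n := lt_of_lt_of_le hm hmn
  suffices h : ∀ d, d ≤ n → ∃ C : ℕ → Finset (Fin n),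
      (∀ k, n - d ≤ k → k ≤ n → (C k).card = k) ∧
      (∀ k, n - d ≤ k → k < n → C k ⊆ C (k + 1)) ∧
      (∀ k, n - d ≤ k → m ≤ k → k ≤ n → Good x (C k) k) by
    obtain ⟨C, h1, h2, h3⟩ := h n le_rfl
    exact ⟨C, fun k hk => h1 k (by omega) hk, fun k hk => h2 k (by omega) hk,
      fun k h h' => h3 k (by omega) h h'⟩
  intro d
  induction d with
  | zero =>
    intro _
    refine ⟨fun _ => Finset.univ, ?_, ?_, ?_⟩
    · intro k h1 h2
      have : k = n := by omega
      simp [this]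
    · intro k h1 h2; omega
    · intro k h1 hmk h2
      have hkn : k = n := by omega
      subst hkn
      refine ⟨fun _ => ((k : ℝ) - m) / k, ?_, ?_, ?_, ?_⟩
      · intro i
        have hk0 : (0:ℝ) < k := by exact_mod_cast hn
        have hmk' : (m:ℝ) ≤ k := by exact_mod_cast hmn
        constructor
        · apply div_nonneg _ hk0.le; linarith
        · rw [div_le_one hk0]
          have hm' : (0:ℝ) < m := by exact_mod_cast hm
          linarith
      · intro i hi; simp at hi
      · have hk0 : (k:ℝ) ≠ 0 := by positivity
        rw [Finset.sum_const]
        rw [Finset.card_univ, Fintype.card_fin]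
        rw [nsmul_eq_mul]
        field_simp
      · rw [← Finset.smul_sum]
        have : ∑ i ∈ Finset.univ, x i = 0 := hx_sum
        rw [this, smul_zero]
  | succ d ih =>
    intro hd
    obtain ⟨C, h1, h2, h3⟩ := ih (by omega)
    set b : ℕ := n - (d + 1) with hbdef
    have hb1 : b + 1 = n - d := by omega
    have hbn : b < n := by omega
    have hcb1 : (C (b+1)).card = b + 1 := h1 (b+1) (by omega) (by omega)
    have hstep : ∃ i ∈ C (b+1), (m ≤ b → Good x ((C (b+1)).erase i) b) := by
      by_cases hmb : m ≤ b
      · obtain ⟨i, hi, hg⟩ := good_step x (C (b+1)) b hm hmb hcb1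
          (h3 (b+1) (by omega) (by omega) (by omega))
        exact ⟨i, hi, fun _ => hg⟩
      · have : (C (b+1)).Nonempty := by
          rw [← Finset.card_pos, hcb1]; omega
        obtain ⟨i, hi⟩ := this
        exact ⟨i, hi, fun h => absurd h hmb⟩
    obtain ⟨i, hiC, hgood⟩ := hstep
    refine ⟨fun k => if k ≤ b then (C (b+1)).erase i else C k, ?_, ?_, ?_⟩
    · intro k hk1 hk2
      by_cases hk : k ≤ b
      · have : k = b := by omega
        subst this
        simp only [if_pos le_rfl]
        rw [Finset.card_erase_of_mem hiC, hcb1]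
        omega
      · simp only [if_neg hk]
        exact h1 k (by omega) hk2
    · intro k hk1 hk2
      by_cases hk : k ≤ b
      · have hkb : k = b := by omega
        subst hkb
        simp only [if_pos le_rfl, if_neg (by omega : ¬ b + 1 ≤ b)]
        exact Finset.erase_subset _ _
      · simp only [if_neg hk, if_neg (by omega : ¬ k + 1 ≤ b)]
        exact h2 k (by omega) hk2
    · intro k hk1 hmk hk2
      by_cases hk : k ≤ b
      · have hkb : k = b := by omega
        subst hkb
        simp only [if_pos le_rfl]
        exact hgood hmk
      · simp only [if_neg hk]
        exact h3 k (by omega) hmk hk2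

lemma perm_of_chain (C : ℕ → Finset (Fin n)) (hcard : ∀ k, k ≤ n → (C k).card = k)
    (hsub : ∀ k, k < n → C k ⊆ C (k + 1)) :
    ∃ π : Equiv.Perm (Fin n), ∀ k, k ≤ n →
      (Finset.univ.filter fun j : Fin n => (j : ℕ) < k).image π = C k := by
  classical
  have hmono : ∀ a b, a ≤ b → b ≤ n → C a ⊆ C b := by
    intro a b hab hbn
    induction b, hab using Nat.le_induction with
    | base => exact Finset.Subset.refl _
    | succ b hab ih =>
      exact (ih (by omega)).trans (hsub b (by omega))
  have hD : ∀ j : Fin n, (C ((j : ℕ) + 1) \ C (j : ℕ)).Nonempty := by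
    intro j
    rw [← Finset.card_pos, Finset.card_sdiff_of_subset (hsub j j.2),
      hcard _ j.2, hcard _ (by omega)]
    omega
  set σ : Fin n → Fin n := fun j => (C ((j : ℕ) + 1) \ C (j : ℕ)).min' (hD j) with hσdef
  have hσmem : ∀ j : Fin n, σ j ∈ C ((j : ℕ) + 1) ∧ σ j ∉ C (j : ℕ) := by
    intro j
    have := Finset.min'_mem _ (hD j)
    exact Finset.mem_sdiff.1 this
  have hinj : Function.Injective σ := by
    intro a b hab
    by_contra hne
    rcases Fin.lt_or_lt_of_ne hne with h | h
    · have h1 : σ a ∈ C ((b : ℕ)) :=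
        hmono ((a : ℕ) + 1) (b : ℕ) (by exact h) b.2.le ((hσmem a).1)
      rw [hab] at h1
      exact (hσmem b).2 h1
    · have h1 : σ b ∈ C ((a : ℕ)) :=
        hmono ((b : ℕ) + 1) (a : ℕ) (by exact h) a.2.le ((hσmem b).1)
      rw [← hab] at h1
      exact (hσmem a).2 h1
  refine ⟨Equiv.ofBijective σ ((Finite.injective_iff_bijective).1 hinj), ?_⟩
  intro k
  induction k with
  | zero =>
    intro _
    have h0 : C 0 = ∅ := Finset.card_eq_zero.1 (hcard 0 (Nat.zero_le n))
    simp [h0]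
  | succ k ih =>
    intro hk
    have hkn : k < n := by omega
    have hfil : (Finset.univ.filter fun j : Fin n => (j : ℕ) < k + 1) =
        insert (⟨k, hkn⟩ : Fin n) (Finset.univ.filter fun j : Fin n => (j : ℕ) < k) := by
      ext j
      simp only [Finset.mem_filter, Finset.mem_univ, true_and, Finset.mem_insert]
      constructor
      · intro h
        rcases Nat.lt_succ_iff_lt_or_eq.1 h with h | h
        · exact Or.inr h
        · exact Or.inl (Fin.ext h)
      · rintro (rfl | h)
        · simp
        · omega
    rw [hfil, Finset.image_insert, ih (by omega)]
    have hσk : σ ⟨k, hkn⟩ ∈ C (k + 1) ∧ σ ⟨k, hkn⟩ ∉ C k := hσmem ⟨k, hkn⟩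
    have hsubset : insert (σ ⟨k, hkn⟩) (C k) ⊆ C (k + 1) :=
      Finset.insert_subset hσk.1 (hsub k hkn)
    have hcards : (C (k+1)).card ≤ (insert (σ ⟨k, hkn⟩) (C k)).card := by
      rw [Finset.card_insert_of_notMem hσk.2, hcard k (by omega), hcard (k+1) hk]
    exact Finset.eq_of_subset_of_card_le hsubset hcards

end SteinitzAux



/-- **Steinitz lemma** (Grinberg–Sevast'yanov constant `c(m) = m`):
if `x 1, …, x n ∈ ℝ^m` have norm at most `1` (in an arbitrary norm `N`) and sum to zero,
then they can be permuted so that every partial sum has norm at most `m`. -/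
theorem steinitz_lemma
    (m n : ℕ) (hm : 0 < m) (hn : 0 < n)
    (N : (Fin m → ℝ) → ℝ)
    (hN_smul : ∀ (a : ℝ) (v : Fin m → ℝ), N (a • v) = |a| * N v)
    (hN_add : ∀ v w : Fin m → ℝ, N (v + w) ≤ N v + N w)
    (hN_zero : ∀ v : Fin m → ℝ, N v = 0 ↔ v = 0)
    (x : Fin n → Fin m → ℝ)
    (hx_norm : ∀ i, N (x i) ≤ 1)
    (hx_sum : ∑ i, x i = 0) :
    ∃ π : Equiv.Perm (Fin n),
      ∀ k : ℕ, 1 ≤ k → k ≤ n →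
        N (∑ j ∈ Finset.univ.filter (fun j : Fin n => (j : ℕ) < k), x (π j)) ≤ (m : ℝ) := by
  classical
  by_cases hmn : n ≤ m
  · refine ⟨Equiv.refl _, ?_⟩
    intro k _ hk
    calc N (∑ j ∈ Finset.univ.filter (fun j : Fin n => (j : ℕ) < k), x ((Equiv.refl _) j))
        ≤ ∑ j ∈ Finset.univ.filter (fun j : Fin n => (j : ℕ) < k), N (x ((Equiv.refl _) j)) :=
          SteinitzAux.N_sum_le' N hN_smul hN_add _ _
      _ ≤ ∑ j ∈ Finset.univ.filter (fun j : Fin n => (j : ℕ) < k), 1 :=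
          Finset.sum_le_sum fun i _ => hx_norm _
      _ = ((Finset.univ.filter (fun j : Fin n => (j : ℕ) < k)).card : ℝ) := by simp
      _ ≤ (m : ℝ) := by
          have h1 : (Finset.univ.filter (fun j : Fin n => (j : ℕ) < k)).card ≤ n := by
            calc (Finset.univ.filter (fun j : Fin n => (j : ℕ) < k)).card
                ≤ (Finset.univ : Finset (Fin n)).card := Finset.card_le_card (Finset.filter_subset _ _)
              _ = n := by simp
          exact_mod_cast h1.trans hmn
  · have hmn' : m ≤ n := le_of_not_ge hmn
    obtain ⟨C, h1, h2, h3⟩ := SteinitzAux.chain_exists x hm hmn' hx_sum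
    obtain ⟨π, hπ⟩ := SteinitzAux.perm_of_chain C h1 h2
    refine ⟨π, ?_⟩
    intro k hk1 hk2
    have himg := hπ k hk2
    have hsum : ∑ j ∈ Finset.univ.filter (fun j : Fin n => (j : ℕ) < k), x (π j)
        = ∑ i ∈ C k, x i := by
      rw [← himg, Finset.sum_image (fun a _ b _ h => π.injective h)]
    rw [hsum]
    by_cases hmk : m ≤ k
    · exact SteinitzAux.good_bound N hN_smul hN_add x hx_norm (C k) k (h1 k hk2)
        (h3 k hmk hk2)
    · calc N (∑ i ∈ C k, x i) ≤ ∑ i ∈ C k, N (x i) :=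
            SteinitzAux.N_sum_le' N hN_smul hN_add _ _
        _ ≤ ∑ _i ∈ C k, (1:ℝ) := Finset.sum_le_sum fun i _ => hx_norm _
        _ = ((C k).card : ℝ) := by simp
        _ ≤ (m : ℝ) := by
            rw [h1 k hk2]
            exact_mod_cast le_of_not_ge hmk
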